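/- arXiv:math/0608140 — 3 statements merged into one kernel-verified Lean document; each statement's English description precedes it below -/
import Mathlib

section
/- For every dimension d ≥ 1, every integer k ≥ 0, and all integers n_1,…,n_d ≥ 3, the limit inferior as n → ∞ of β_k(T^(d)[n])/n^d is at least τ_k(T[n_1,…,n_d]) = β_k(T[n_1,…,n_d])/(n_1⋯n_d). -/
open Filter Topology

/-- The `d`-dimensional kings graph on `Fin (n 0) × ⋯ × Fin (n (d-1))`:
distinct vertices are adjacent iff their coordinates differ by at most 1. -/
def kingsGraph (d : ℕ) (n : Fin d → ℕ) :
    SimpleGraph (∀ i : Fin d, Fin (n i)) where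
  Adj u v := u ≠ v ∧ ∀ i, |((v i : ℤ)) - (u i : ℤ)| ≤ 1
  symm := by
    constructor
    rintro u v ⟨h1, h2⟩
    exact ⟨h1.symm, fun i => by rw [abs_sub_comm]; exact h2 i⟩
  loopless := by constructor; intro v h; exact h.1 rfl

/-- The `d`-dimensional toroidal kings graph on `ZMod (n 0) × ⋯ × ZMod (n (d-1))`:
distinct vertices are adjacent iff each coordinate difference is `-1`, `0` or `1`. -/
def torusGraph (d : ℕ) (n : Fin d → ℕ) :
    SimpleGraph (∀ i : Fin d, ZMod (n i)) where
  Adj u v := u ≠ v ∧ ∀ i, v i - u i = -1 ∨ v i - u i = 0 ∨ v i - u i = 1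
  symm := by
    constructor
    rintro u v ⟨h1, h2⟩
    refine ⟨h1.symm, fun i => ?_⟩
    rcases h2 i with h | h | h
    · right; right; rw [show u i - v i = -(v i - u i) by ring, h]; norm_num
    · right; left; rw [show u i - v i = -(v i - u i) by ring, h]; norm_num
    · left; rw [show u i - v i = -(v i - u i) by ring, h]
  loopless := by constructor; intro v h; exact h.1 rfl

/-- A set `S` of vertices is `k`-dependent if every vertex of `S`
has at most `k` neighbors in `S`. -/
def IsKDependent {V : Type*} (G : SimpleGraph V) (k : ℕ) (S : Set V) : Prop :=
  ∀ v ∈ S, (S ∩ G.neighborSet v).ncard ≤ k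

/-- `betaK G k` is the maximum cardinality of a `k`-dependent set in `G`. -/
noncomputable def betaK {V : Type*} (G : SimpleGraph V) (k : ℕ) : ℕ :=
  sSup {m | ∃ S : Set V, IsKDependent G k S ∧ S.ncard = m}

/-- A set `S` of vertices is half-dependent if every vertex `v ∈ S`
has at most `|N(v)|/2` neighbors in `S`. -/
def IsHalfDependent {V : Type*} (G : SimpleGraph V) (S : Set V) : Prop :=
  ∀ v ∈ S, 2 * (S ∩ G.neighborSet v).ncard ≤ (G.neighborSet v).ncard

/-- `halfNum G` is the maximum cardinality of a half-dependent set in `G`. -/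
noncomputable def halfNum {V : Type*} (G : SimpleGraph V) : ℕ :=
  sSup {m | ∃ S : Set V, IsHalfDependent G S ∧ S.ncard = m}

/-- A graph is vertex-transitive if any vertex can be mapped to any other
by a graph automorphism. -/
def IsVertexTransitive {V : Type*} (G : SimpleGraph V) : Prop :=
  ∀ u v : V, ∃ f : G ≃g G, f u = v


section Aux

open Set

lemma betaK_bddAbove {V : Type*} [Finite V] (G : SimpleGraph V) (k : ℕ) :
    BddAbove {m | ∃ S : Set V, IsKDependent G k S ∧ S.ncard = m} := by
  refine ⟨Nat.card V, ?_⟩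
  rintro x ⟨S, -, rfl⟩
  have := Set.ncard_le_ncard (Set.subset_univ S) Set.finite_univ
  simpa [Set.ncard_univ] using this

lemma betaK_le {V : Type*} [Finite V] (G : SimpleGraph V) (k : ℕ) (S : Set V)
    (hS : IsKDependent G k S) : S.ncard ≤ betaK G k :=
  le_csSup (betaK_bddAbove G k) ⟨S, hS, rfl⟩

lemma betaK_attained {V : Type*} [Finite V] (G : SimpleGraph V) (k : ℕ) :
    ∃ S : Set V, IsKDependent G k S ∧ S.ncard = betaK G k := by
  have hne : {m | ∃ S : Set V, IsKDependent G k S ∧ S.ncard = m}.Nonempty :=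
    ⟨0, ∅, fun v hv => absurd hv (Set.notMem_empty v), by simp⟩
  exact Nat.sSup_mem hne (betaK_bddAbove G k)

lemma small_int {M : ℕ} (hM : 3 ≤ M) {e : ℤ} (he : |e| ≤ 2) (h : (e : ZMod M) = 0) :
    e = 0 := by
  have hdvd := (ZMod.intCast_zmod_eq_zero_iff_dvd e M).mp h
  rcases eq_or_ne e 0 with h0 | h0
  · exact h0
  · have h1 := Int.le_of_dvd (abs_pos.mpr h0) ((dvd_abs _ _).mpr hdvd)
    have h2 : (3 : ℤ) ≤ (M : ℤ) := by exact_mod_cast hM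
    linarith

lemma coord_step {n : ℕ} (hn : 3 ≤ n) {a b : ZMod n} (h1 : 1 ≤ a.val)
    (h2 : a.val + 2 ≤ n) (h : b - a = -1 ∨ b - a = 0 ∨ b - a = 1) :
    ∃ e : ℤ, (e = -1 ∨ e = 0 ∨ e = 1) ∧ ((b.val : ℤ) = (a.val : ℤ) + e) ∧
      (e = 0 → b = a) := by
  haveI : NeZero n := ⟨by omega⟩
  haveI : Fact (1 < n) := ⟨by omega⟩
  have hval1 : (1 : ZMod n).val = 1 := ZMod.val_one n
  rcases h with h | h | h
  · -- b - a = -1, so a = b + 1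
    have ha : a = b + 1 := by linear_combination -h
    by_cases hb : b.val + 1 < n
    · have : a.val = b.val + 1 := by
        rw [ha, ZMod.val_add_of_lt (by rw [hval1]; omega), hval1]
      refine ⟨-1, Or.inl rfl, by push_cast; omega, by intro h0; norm_num at h0⟩
    · -- b.val = n - 1, so a = 0, contradiction
      exfalso
      have hbv : b.val = n - 1 := by have := ZMod.val_lt b; omega
      have hb0 : b = ((n - 1 : ℕ) : ZMod n) := by
        conv_lhs => rw [← ZMod.natCast_rightInverse (n := n) b]
        rw [hbv]
      have : a = 0 := by
        rw [ha, hb0, show ((1 : ZMod n)) = ((1 : ℕ) : ZMod n) by norm_cast,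
          ← Nat.cast_add, show n - 1 + 1 = n by omega, ZMod.natCast_self]
      rw [this, ZMod.val_zero] at h1
      omega
  · have : b = a := by linear_combination h
    exact ⟨0, Or.inr (Or.inl rfl), by rw [this]; ring, fun _ => this⟩
  · have hb : b = a + 1 := by linear_combination h
    have : b.val = a.val + 1 := by
      rw [hb, ZMod.val_add_of_lt (by rw [hval1]; omega), hval1]
    refine ⟨1, Or.inr (Or.inr rfl), by push_cast; omega, by intro h0; norm_num at h0⟩

end Aux

section Aux2

lemma adj_vals {d n : ℕ} (hn : 3 ≤ n) {x y : ∀ _ : Fin d, ZMod n}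
    (hx : ∀ i, 1 ≤ (x i).val ∧ (x i).val + 2 ≤ n)
    (hadj : (torusGraph d (fun _ => n)).Adj x y) :
    ∃ e : Fin d → ℤ, (∀ i, e i = -1 ∨ e i = 0 ∨ e i = 1) ∧
      (∀ i, ((y i).val : ℤ) = ((x i).val : ℤ) + e i) ∧ ∃ i, e i ≠ 0 := by
  obtain ⟨hne, hdiff⟩ := hadj
  choose e he1 he2 he3 using fun i => coord_step hn (hx i).1 (hx i).2 (hdiff i)
  refine ⟨e, he1, he2, ?_⟩
  by_contra hc
  push_neg at hc
  exact hne (funext fun i => (he3 i (hc i)).symm)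

lemma key_bound (d k : ℕ) (m : Fin d → ℕ) (hm : ∀ i, 3 ≤ m i) (n : ℕ) (hn : 3 ≤ n) :
    betaK (torusGraph d m) k * ∏ i, ((n - 2) / m i) ≤
      betaK (torusGraph d (fun _ => n)) k := by
  haveI : NeZero n := ⟨by omega⟩
  haveI : ∀ i, NeZero (m i) := fun i => ⟨by have := hm i; omega⟩
  obtain ⟨S, hS, hScard⟩ := betaK_attained (torusGraph d m) k
  set red : (∀ _ : Fin d, ZMod n) → (∀ i, ZMod (m i)) :=
    fun x i => ((((x i).val : ℤ) - 1 : ℤ) : ZMod (m i)) with hred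
  set S' : Set (∀ _ : Fin d, ZMod n) :=
    {x | (∀ i, 1 ≤ (x i).val ∧ (x i).val + 2 ≤ n) ∧ red x ∈ S} with hSdef
  have redsub : ∀ (x y : ∀ _ : Fin d, ZMod n) (e : Fin d → ℤ) (i : Fin d),
      ((y i).val : ℤ) = ((x i).val : ℤ) + e i →
      red y i - red x i = ((e i : ℤ) : ZMod (m i)) := by
    intro x y e i hi
    show ((((y i).val : ℤ) - 1 : ℤ) : ZMod (m i)) -
        ((((x i).val : ℤ) - 1 : ℤ) : ZMod (m i)) = _
    rw [← Int.cast_sub]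
    congr 1
    omega
  have habs : ∀ e : ℤ, (e = -1 ∨ e = 0 ∨ e = 1) → |e| ≤ 1 := by
    rintro e (rfl | rfl | rfl) <;> norm_num
  have hdep : IsKDependent (torusGraph d (fun _ => n)) k S' := by
    intro x hx
    refine le_trans (Set.ncard_le_ncard_of_injOn red ?_ ?_ (Set.toFinite _))
      (hS (red x) hx.2)
    · rintro y ⟨hyS', hyN⟩
      obtain ⟨e, he1, he2, i0, hi0⟩ := adj_vals hn hx.1 hyN
      refine ⟨hyS'.2, ?_⟩
      show (torusGraph d m).Adj (red x) (red y)
      refine ⟨?_, fun i => ?_⟩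
      · intro hEq
        apply hi0
        have h0 : red y i0 - red x i0 = 0 := by rw [← hEq]; ring
        rw [redsub x y e i0 (he2 i0)] at h0
        exact small_int (hm i0) ((habs _ (he1 i0)).trans one_le_two) h0
      · rw [redsub x y e i (he2 i)]
        rcases he1 i with h | h | h <;> rw [h] <;> push_cast <;> tauto
    · rintro y ⟨hyS1, hyN⟩ y' ⟨hyS2, hyN'⟩ hEq
      obtain ⟨e, he1, he2, -⟩ := adj_vals hn hx.1 hyN
      obtain ⟨e', he1', he2', -⟩ := adj_vals hn hx.1 hyN'
      funext i
      apply ZMod.val_injective n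
      have a1 := redsub x y e i (he2 i)
      have a2 := redsub x y' e' i (he2' i)
      have hcast : ((e i - e' i : ℤ) : ZMod (m i)) = 0 := by
        push_cast
        rw [← a1, ← a2, hEq]
        ring
      have he0 : e i - e' i = 0 := by
        refine small_int (hm i) ?_ hcast
        have u1 := habs _ (he1 i)
        have u2 := habs _ (he1' i)
        rw [abs_le] at u1 u2 ⊢
        omega
      have : ((y i).val : ℤ) = ((y' i).val : ℤ) := by rw [he2 i, he2' i]; omega
      exact_mod_cast this
  set q : Fin d → ℕ := fun i => (n - 2) / m i with hq
  have hqle : ∀ i, q i * m i ≤ n - 2 := fun i => Nat.div_mul_le_self (n - 2) (m i)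
  set F : (↥S × ∀ i, Fin (q i)) → (∀ _ : Fin d, ZMod n) :=
    fun p i => (((1 + m i * (p.2 i : ℕ) + ((p.1 : ∀ j, ZMod (m j)) i).val : ℕ)) : ZMod n)
    with hF
  have hw : ∀ (p : ↥S × ∀ i, Fin (q i)) (i : Fin d),
      1 + m i * (p.2 i : ℕ) + ((p.1 : ∀ j, ZMod (m j)) i).val + 2 ≤ n := by
    intro p i
    have h1 : ((p.1 : ∀ j, ZMod (m j)) i).val < m i := ZMod.val_lt _
    have h2 : (p.2 i : ℕ) + 1 ≤ q i := (p.2 i).isLt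
    have h3 : m i * ((p.2 i : ℕ) + 1) ≤ m i * q i := Nat.mul_le_mul_left _ h2
    have h4 : m i * q i ≤ n - 2 := by rw [Nat.mul_comm]; exact hqle i
    have h5 : 1 + m i * (p.2 i : ℕ) + ((p.1 : ∀ j, ZMod (m j)) i).val
        ≤ m i * ((p.2 i : ℕ) + 1) := by
      rw [Nat.mul_add, Nat.mul_one]
      have := Nat.add_le_add_left h1 (m i * (p.2 i : ℕ))
      omega
    have h6 := le_trans h5 (le_trans h3 h4)
    omega
  have hvalF : ∀ (p : ↥S × ∀ i, Fin (q i)) (i : Fin d),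
      (F p i).val = 1 + m i * (p.2 i : ℕ) + ((p.1 : ∀ j, ZMod (m j)) i).val :=
    fun p i => ZMod.val_natCast_of_lt (by have := hw p i; omega)
  have hredF : ∀ p : ↥S × ∀ i, Fin (q i), red (F p) = (p.1 : ∀ j, ZMod (m j)) := by
    intro p
    funext i
    show ((((F p i).val : ℤ) - 1 : ℤ) : ZMod (m i)) = _
    rw [hvalF]
    push_cast
    simp [ZMod.natCast_self, ZMod.natCast_val, ZMod.cast_id]
  have hFS' : ∀ p, F p ∈ S' := by
    intro p
    refine ⟨fun i => ⟨by rw [hvalF]; omega, by rw [hvalF]; exact hw p i⟩, ?_⟩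
    rw [hredF]
    exact p.1.2
  have hinj : Function.Injective F := by
    intro p p' hEq
    have hs : p.1 = p'.1 := Subtype.ext (by rw [← hredF p, ← hredF p', hEq])
    have ht : p.2 = p'.2 := by
      funext i
      have h1 : (F p i).val = (F p' i).val := by rw [hEq]
      rw [hvalF, hvalF, hs] at h1
      have h2 : m i * ((p.2 i : ℕ)) = m i * ((p'.2 i : ℕ)) := by omega
      exact Fin.ext (Nat.eq_of_mul_eq_mul_left (by have := hm i; omega) h2)
    exact Prod.ext hs ht
  have hcard : betaK (torusGraph d m) k * ∏ i, q i ≤ S'.ncard := by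
    calc betaK (torusGraph d m) k * ∏ i, q i
        = Nat.card (↥S × ∀ i, Fin (q i)) := by
          rw [Nat.card_prod, Nat.card_coe_set_eq, hScard, Nat.card_pi]
          simp
      _ ≤ Nat.card ↥S' :=
          Nat.card_le_card_of_injective (fun p => (⟨F p, hFS' p⟩ : ↥S'))
            (fun p p' h => hinj (congrArg Subtype.val h))
      _ = S'.ncard := Nat.card_coe_set_eq S'
  exact le_trans hcard (betaK_le _ _ _ hdep)


end Aux2

/-- liminf of β_k(T^(d)[n])/n^d is at least τ_k(T[n_1,…,n_d]). -/
theorem stmt_2 (d : ℕ) (hd : 1 ≤ d) (k : ℕ) (m : Fin d → ℕ) (hm : ∀ i, 3 ≤ m i) :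
    (betaK (torusGraph d m) k : ℝ) / (∏ i, (m i : ℝ)) ≤
      Filter.liminf
        (fun n : ℕ => (betaK (torusGraph d (fun _ => n)) k : ℝ) / (n : ℝ) ^ d)
        Filter.atTop := by
  set β := betaK (torusGraph d m) k with hβ
  set g : ℕ → ℝ := fun n => (betaK (torusGraph d (fun _ => n)) k : ℝ) / (n : ℝ) ^ d
    with hg
  set f : ℕ → ℝ := fun n => (β : ℝ) * ∏ i, ((((n - 2) / m i : ℕ)) : ℝ) / (n : ℝ)
    with hf
  have hfac : ∀ i : Fin d, Filter.Tendsto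
      (fun n : ℕ => ((((n - 2) / m i : ℕ)) : ℝ) / (n : ℝ)) atTop
      (𝓝 (1 / (m i : ℝ))) := by
    intro i
    have hmi : (0 : ℝ) < (m i : ℝ) := by
      have := hm i
      have : (3 : ℝ) ≤ (m i : ℝ) := by exact_mod_cast this
      linarith
    have hL : Filter.Tendsto
        (fun n : ℕ => 1 / (m i : ℝ) - ((2 + (m i : ℝ)) / (m i : ℝ)) / (n : ℝ))
        atTop (𝓝 (1 / (m i : ℝ))) := by
      have h0 := tendsto_const_div_atTop_nhds_zero_nat ((2 + (m i : ℝ)) / (m i : ℝ))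
      have hc : Filter.Tendsto (fun _ : ℕ => 1 / (m i : ℝ)) atTop
          (𝓝 (1 / (m i : ℝ))) := tendsto_const_nhds
      have h1 := hc.sub h0
      simpa using h1
    refine tendsto_of_tendsto_of_tendsto_of_le_of_le' hL tendsto_const_nhds ?_ ?_
    · filter_upwards [Filter.eventually_ge_atTop 3] with n hn
      have hn0 : (0 : ℝ) < (n : ℝ) := by
        have : (3 : ℝ) ≤ (n : ℝ) := by exact_mod_cast hn
        linarith
      have hkey : (n : ℝ) - 2 - (m i : ℝ) ≤ (m i : ℝ) * (((n - 2) / m i : ℕ) : ℝ) := by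
        have h1 := Nat.div_add_mod (n - 2) (m i)
        have h2 : (n - 2) % m i < m i := Nat.mod_lt _ (by have := hm i; omega)
        have h3 : (n - 2 : ℕ) ≤ m i * ((n - 2) / m i) + m i := by omega
        have h4 : ((n - 2 : ℕ) : ℝ) = (n : ℝ) - 2 := by
          have : (2 : ℕ) ≤ n := by omega
          push_cast [this]
          ring
        have h5 : ((n - 2 : ℕ) : ℝ) ≤ (m i : ℝ) * (((n - 2) / m i : ℕ) : ℝ) + (m i : ℝ) := by
          exact_mod_cast h3
        linarith [h4 ▸ h5]
      have hub : ((n : ℝ) - 2 - (m i : ℝ)) / (m i : ℝ) ≤ (((n - 2) / m i : ℕ) : ℝ) := by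
        rw [div_le_iff₀ hmi]
        linarith [hkey]
      calc 1 / (m i : ℝ) - ((2 + (m i : ℝ)) / (m i : ℝ)) / (n : ℝ)
          = (((n : ℝ) - 2 - (m i : ℝ)) / (m i : ℝ)) / (n : ℝ) := by
            field_simp
            ring
        _ ≤ (((n - 2) / m i : ℕ) : ℝ) / (n : ℝ) := by gcongr
    · filter_upwards [Filter.eventually_ge_atTop 3] with n hn
      have hn0 : (0 : ℝ) < (n : ℝ) := by
        have : (3 : ℝ) ≤ (n : ℝ) := by exact_mod_cast hn
        linarith
      rw [div_le_div_iff₀ hn0 hmi, one_mul]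
      have h2 : (n - 2) / m i * m i ≤ n := le_trans (Nat.div_mul_le_self _ _) (by omega)
      exact_mod_cast h2
  have hflim : Filter.Tendsto f atTop (𝓝 ((β : ℝ) / ∏ i, (m i : ℝ))) := by
    have h1 := Filter.Tendsto.const_mul (β : ℝ)
      (tendsto_finset_prod (Finset.univ) (fun i _ => hfac i))
    have h2 : (β : ℝ) / ∏ i, (m i : ℝ) = (β : ℝ) * ∏ i : Fin d, 1 / (m i : ℝ) := by
      rw [div_eq_mul_inv, ← Finset.prod_inv_distrib]
      simp [one_div]
    rw [h2]
    exact h1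
  have hfg : ∀ᶠ n in atTop, f n ≤ g n := by
    filter_upwards [Filter.eventually_ge_atTop 3] with n hn
    have hkb := key_bound d k m hm n hn
    have hn0 : (0 : ℝ) < (n : ℝ) := by
      have : (3 : ℝ) ≤ (n : ℝ) := by exact_mod_cast hn
      linarith
    have hfeq : f n = ((β * ∏ i, (n - 2) / m i : ℕ) : ℝ) / (n : ℝ) ^ d := by
      rw [hf]
      push_cast
      rw [Finset.prod_div_distrib, Finset.prod_const]
      simp [Finset.card_univ, mul_div_assoc]
    rw [hfeq, hg]
    have : ((β * ∏ i, (n - 2) / m i : ℕ) : ℝ) ≤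
        ((betaK (torusGraph d (fun _ => n)) k : ℕ) : ℝ) := by exact_mod_cast hkb
    exact (div_le_div_iff_of_pos_right (pow_pos hn0 d)).mpr this
  have hgb : Filter.IsBoundedUnder (· ≤ ·) atTop g := by
    refine ⟨1, ?_⟩
    rw [Filter.eventually_map]
    filter_upwards [Filter.eventually_ge_atTop 3] with n hn
    haveI : NeZero n := ⟨by omega⟩
    obtain ⟨S, hSd, hc⟩ := betaK_attained (torusGraph d (fun _ => n)) k
    have h1 : betaK (torusGraph d (fun _ => n)) k ≤ n ^ d := by
      rw [← hc]
      have h2 := Set.ncard_le_ncard (Set.subset_univ S) Set.finite_univ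
      have h3 : (Set.univ : Set (∀ _ : Fin d, ZMod n)).ncard = n ^ d := by
        rw [Set.ncard_univ, Nat.card_pi]
        simp [Nat.card_eq_fintype_card, ZMod.card]
      rw [h3] at h2
      exact h2
    have hn0 : (0 : ℝ) < (n : ℝ) ^ d :=
      pow_pos (by exact_mod_cast (by omega : 0 < n)) d
    show (betaK (torusGraph d (fun _ => n)) k : ℝ) / (n : ℝ) ^ d ≤ 1
    rw [div_le_one hn0]
    exact_mod_cast h1
  rw [← hflim.liminf_eq]
  exact Filter.liminf_le_liminf hfg hflim.isBoundedUnder_ge hgb.isCoboundedUnder_ge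
end

section
/- For every dimension d ≥ 1, setting k = (3^d − 1)/2, there exists a real number L such that both β_k(T^(d)[n])/n^d → L and h(K^(d)[n])/n^d → L as n → ∞; that is, the k-dependent toroidal limiting density τ_k^(d) equals the half-dependent limiting density ρ^(d). -/
open Filter Topology

section Aux

-- ========== basic sSup facts ==========
variable {V W : Type*}

lemma aux_ncard_le_card [Fintype V] (S : Set V) : S.ncard ≤ Fintype.card V := by
  simpa [Set.ncard_univ, Nat.card_eq_fintype_card] using
    Set.ncard_le_ncard (Set.subset_univ S) Set.finite_univ

lemma betaK_bdd [Fintype V] (G : SimpleGraph V) (k : ℕ) :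
    BddAbove {m | ∃ S : Set V, IsKDependent G k S ∧ S.ncard = m} := by
  refine ⟨Fintype.card V, fun m hm => ?_⟩
  obtain ⟨S, _, rfl⟩ := hm; exact aux_ncard_le_card S

lemma betaK_nonempty (G : SimpleGraph V) (k : ℕ) :
    {m | ∃ S : Set V, IsKDependent G k S ∧ S.ncard = m}.Nonempty :=
  ⟨0, ∅, fun v hv => absurd hv (Set.notMem_empty v), Set.ncard_empty V⟩

lemma betaK_witness [Fintype V] (G : SimpleGraph V) (k : ℕ) :
    ∃ S : Set V, IsKDependent G k S ∧ S.ncard = betaK G k :=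
  Nat.sSup_mem (betaK_nonempty G k) (betaK_bdd G k)

lemma le_betaK [Fintype V] (G : SimpleGraph V) (k : ℕ) {S : Set V}
    (h : IsKDependent G k S) : S.ncard ≤ betaK G k :=
  le_csSup (betaK_bdd G k) ⟨S, h, rfl⟩

lemma betaK_le_card [Fintype V] (G : SimpleGraph V) (k : ℕ) : betaK G k ≤ Fintype.card V := by
  obtain ⟨S, _, h⟩ := betaK_witness G k
  exact h ▸ aux_ncard_le_card S

lemma halfNum_bdd [Fintype V] (G : SimpleGraph V) :
    BddAbove {m | ∃ S : Set V, IsHalfDependent G S ∧ S.ncard = m} := by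
  refine ⟨Fintype.card V, fun m hm => ?_⟩
  obtain ⟨S, _, rfl⟩ := hm; exact aux_ncard_le_card S

lemma halfNum_nonempty (G : SimpleGraph V) :
    {m | ∃ S : Set V, IsHalfDependent G S ∧ S.ncard = m}.Nonempty :=
  ⟨0, ∅, fun v hv => absurd hv (Set.notMem_empty v), Set.ncard_empty V⟩

lemma halfNum_witness [Fintype V] (G : SimpleGraph V) :
    ∃ S : Set V, IsHalfDependent G S ∧ S.ncard = halfNum G :=
  Nat.sSup_mem (halfNum_nonempty G) (halfNum_bdd G)

lemma le_halfNum [Fintype V] (G : SimpleGraph V) {S : Set V}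
    (h : IsHalfDependent G S) : S.ncard ≤ halfNum G :=
  le_csSup (halfNum_bdd G) ⟨S, h, rfl⟩

lemma halfNum_le_card [Fintype V] (G : SimpleGraph V) : halfNum G ≤ Fintype.card V := by
  obtain ⟨S, _, h⟩ := halfNum_witness G
  exact h ▸ aux_ncard_le_card S

-- ========== transfer lemmas ==========

lemma count_transfer {G : SimpleGraph V} {H : SimpleGraph W} (φ : V → W)
    (hinj : Function.Injective φ)
    (hbwd : ∀ u v : V, H.Adj (φ v) (φ u) → G.Adj v u) (S : Set V) (hSfin : S.Finite) (v : V) :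
    ((φ '' S) ∩ H.neighborSet (φ v)).ncard ≤ (S ∩ G.neighborSet v).ncard := by
  have hsub : (φ '' S) ∩ H.neighborSet (φ v) ⊆ φ '' (S ∩ G.neighborSet v) := by
    rintro w ⟨⟨u, hu, rfl⟩, hw⟩
    exact ⟨u, ⟨hu, hbwd u v hw⟩, rfl⟩
  calc ((φ '' S) ∩ H.neighborSet (φ v)).ncard
      ≤ (φ '' (S ∩ G.neighborSet v)).ncard :=
        Set.ncard_le_ncard hsub ((hSfin.inter_of_left _).image φ)
    _ = (S ∩ G.neighborSet v).ncard := Set.ncard_image_of_injective _ hinj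

lemma neighbor_le [Fintype W] {G : SimpleGraph V} {H : SimpleGraph W} (φ : V → W)
    (hinj : Function.Injective φ)
    (hfwd : ∀ u v : V, G.Adj v u → H.Adj (φ v) (φ u)) (v : V) :
    (G.neighborSet v).ncard ≤ (H.neighborSet (φ v)).ncard := by
  calc (G.neighborSet v).ncard = (φ '' G.neighborSet v).ncard :=
        (Set.ncard_image_of_injective _ hinj).symm
    _ ≤ (H.neighborSet (φ v)).ncard := by
        refine Set.ncard_le_ncard ?_ (Set.toFinite _)
        rintro w ⟨u, hu, rfl⟩; exact hfwd u v hu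

lemma half_of_kdep [Fintype V] [Fintype W] {G : SimpleGraph V} {H : SimpleGraph W} (k : ℕ)
    (φ : V → W) (hinj : Function.Injective φ)
    (hbwd : ∀ u v : V, H.Adj (φ v) (φ u) → G.Adj v u)
    (hdeg : ∀ v : V, 2 * k ≤ (H.neighborSet (φ v)).ncard)
    {S : Set V} (hS : IsKDependent G k S) : IsHalfDependent H (φ '' S) := by
  rintro w ⟨v, hv, rfl⟩
  calc 2 * ((φ '' S) ∩ H.neighborSet (φ v)).ncard
      ≤ 2 * (S ∩ G.neighborSet v).ncard := by
        have := count_transfer φ hinj hbwd S (Set.toFinite _) v; omega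
    _ ≤ 2 * k := by have := hS v hv; omega
    _ ≤ _ := hdeg v

lemma kdep_of_half [Fintype V] {G : SimpleGraph V} {H : SimpleGraph W} (k : ℕ) (φ : V → W)
    (hinj : Function.Injective φ)
    (hbwd : ∀ u v : V, H.Adj (φ v) (φ u) → G.Adj v u)
    (hdeg : ∀ v : V, (G.neighborSet v).ncard ≤ 2 * k)
    {S : Set V} (hS : IsHalfDependent G S) : IsKDependent H k (φ '' S) := by
  rintro w ⟨v, hv, rfl⟩
  have h1 := count_transfer φ hinj hbwd S (Set.toFinite _) v
  have h2 := hS v hv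
  have h3 := hdeg v
  omega

end Aux

-- ========== degree bounds for kings graphs ==========

lemma code_card (d : ℕ) :
    ({f : Fin d → Fin 3 | f ≠ fun _ => 1} : Set (Fin d → Fin 3)).ncard = 3 ^ d - 1 := by
  have h1 : ({f : Fin d → Fin 3 | f ≠ fun _ => 1} : Set (Fin d → Fin 3)) =
      ({fun _ => 1} : Set (Fin d → Fin 3))ᶜ := by ext f; simp [Set.mem_compl_iff]
  have h2 := Set.ncard_add_ncard_compl ({fun _ => 1} : Set (Fin d → Fin 3))
  have h3 : (Set.univ : Set (Fin d → Fin 3)).ncard = 3 ^ d := by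
    simp [Set.ncard_univ, Nat.card_eq_fintype_card]
  rw [h1]
  simp [Set.ncard_singleton] at h2 ⊢
  omega

lemma kings_deg_le (d n : ℕ) (v : ∀ i : Fin d, Fin n) :
    ((kingsGraph d (fun _ => n)).neighborSet v).ncard ≤ 3 ^ d - 1 := by
  classical
  set enc : (∀ i : Fin d, Fin n) → (Fin d → Fin 3) := fun u i =>
    if (u i : ℕ) < (v i : ℕ) then 0 else if (u i : ℕ) = (v i : ℕ) then 1 else 2 with henc
  have hmaps : ∀ u ∈ (kingsGraph d (fun _ => n)).neighborSet v,
      enc u ∈ {f : Fin d → Fin 3 | f ≠ fun _ => 1} := by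
    rintro u ⟨hne, _⟩
    simp only [Set.mem_setOf_eq, henc]
    intro hcontra
    apply hne
    funext i
    have := congrFun hcontra i
    by_cases h1 : (u i : ℕ) < (v i : ℕ)
    · simp [h1] at this
    · by_cases h2 : (u i : ℕ) = (v i : ℕ)
      · exact (Fin.val_injective h2).symm ▸ rfl
      · simp [h1, h2] at this
  have hinj : Set.InjOn enc ((kingsGraph d (fun _ => n)).neighborSet v) := by
    rintro u ⟨_, hu⟩ u' ⟨_, hu'⟩ h
    funext i
    have hi := congrFun h i
    have b1 := abs_le.1 (hu i)
    have b2 := abs_le.1 (hu' i)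
    simp only [henc] at hi
    apply Fin.val_injective
    by_cases h1 : (u i : ℕ) < (v i : ℕ) <;> by_cases h2 : (u i : ℕ) = (v i : ℕ) <;>
      by_cases h3 : (u' i : ℕ) < (v i : ℕ) <;> by_cases h4 : (u' i : ℕ) = (v i : ℕ) <;>
      simp [h1, h2, h3, h4] at hi ⊢ <;> omega
  calc ((kingsGraph d (fun _ => n)).neighborSet v).ncard
      = (enc '' ((kingsGraph d (fun _ => n)).neighborSet v)).ncard :=
        (Set.ncard_image_of_injOn hinj).symm
    _ ≤ ({f : Fin d → Fin 3 | f ≠ fun _ => 1} : Set (Fin d → Fin 3)).ncard := by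
        refine Set.ncard_le_ncard ?_ (Set.toFinite _)
        rintro w ⟨u, hu, rfl⟩; exact hmaps u hu
    _ = 3 ^ d - 1 := code_card d

lemma kings_deg_ge (d n : ℕ) (v : ∀ i : Fin d, Fin (n + 2))
    (hv : ∀ i, 1 ≤ (v i : ℕ) ∧ (v i : ℕ) ≤ n) :
    3 ^ d - 1 ≤ ((kingsGraph d (fun _ => n + 2)).neighborSet v).ncard := by
  classical
  set dec : (Fin d → Fin 3) → (∀ i : Fin d, Fin (n + 2)) := fun f i =>
    ⟨(v i : ℕ) + (f i : ℕ) - 1, by have := (hv i).2; have := (f i).isLt; omega⟩ with hdec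
  have hmaps : ∀ f ∈ ({f : Fin d → Fin 3 | f ≠ fun _ => 1} : Set (Fin d → Fin 3)),
      dec f ∈ (kingsGraph d (fun _ => n + 2)).neighborSet v := by
    intro f hf
    refine ⟨?_, fun i => ?_⟩
    · intro hcontra
      apply hf
      funext i
      have := congrArg (fun w => (w i : ℕ)) hcontra
      simp only [hdec] at this
      have h1 := (hv i).1
      have h2 := (f i).isLt
      apply Fin.val_injective
      simp only [Fin.val_one]
      omega
    · simp only [hdec]
      have h1 := (hv i).1
      have h2 := (f i).isLt
      rw [show ((dec f i : ℕ) : ℤ) = (v i : ℕ) + (f i : ℕ) - 1 by simp only [hdec]; omega]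
      rw [abs_le]
      constructor <;> omega
  have hinj : Set.InjOn dec ({f : Fin d → Fin 3 | f ≠ fun _ => 1} : Set (Fin d → Fin 3)) := by
    intro f _ g _ h
    funext i
    have := congrArg (fun w => (w i : ℕ)) h
    simp only [hdec] at this
    have h1 := (hv i).1
    apply Fin.val_injective
    omega
  calc 3 ^ d - 1 = ({f : Fin d → Fin 3 | f ≠ fun _ => 1} : Set (Fin d → Fin 3)).ncard :=
        (code_card d).symm
    _ = (dec '' _).ncard := (Set.ncard_image_of_injOn hinj).symm
    _ ≤ _ := by
        refine Set.ncard_le_ncard ?_ (Set.toFinite _)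
        rintro w ⟨f, hf, rfl⟩; exact hmaps f hf

-- ========== arithmetic helpers ==========

lemma zmod_step {n x y : ℕ} (hx : x < n) (hy : y < n)
    (h : (y : ZMod (n+1)) - (x : ZMod (n+1)) = -1 ∨ (y : ZMod (n+1)) - (x : ZMod (n+1)) = 0 ∨
         (y : ZMod (n+1)) - (x : ZMod (n+1)) = 1) :
    -1 ≤ (y:ℤ) - (x:ℤ) ∧ (y:ℤ) - (x:ℤ) ≤ 1 := by
  rcases h with h | h | h
  · have e : ((x : ℕ) : ZMod (n+1)) = ((y + 1 : ℕ) : ZMod (n+1)) := by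
      push_cast; linear_combination -h
    have := congrArg ZMod.val e
    rw [ZMod.val_cast_of_lt (by omega), ZMod.val_cast_of_lt (by omega)] at this
    omega
  · have e : ((y : ℕ) : ZMod (n+1)) = ((x : ℕ) : ZMod (n+1)) := by
      linear_combination h
    have := congrArg ZMod.val e
    rw [ZMod.val_cast_of_lt (by omega), ZMod.val_cast_of_lt (by omega)] at this
    omega
  · have e : ((y : ℕ) : ZMod (n+1)) = ((x + 1 : ℕ) : ZMod (n+1)) := by
      push_cast; linear_combination h
    have := congrArg ZMod.val e
    rw [ZMod.val_cast_of_lt (by omega), ZMod.val_cast_of_lt (by omega)] at this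
    omega

lemma zmod_of_val_step {n : ℕ} [NeZero n] {u v : ZMod n}
    (h : -1 ≤ (u.val : ℤ) - (v.val : ℤ) ∧ (u.val : ℤ) - (v.val : ℤ) ≤ 1) :
    u - v = -1 ∨ u - v = 0 ∨ u - v = 1 := by
  have hu : (u.val : ZMod n) = u := ZMod.natCast_zmod_val u
  have hv : (v.val : ZMod n) = v := ZMod.natCast_zmod_val v
  rcases (show u.val + 1 = v.val ∨ u.val = v.val ∨ u.val = v.val + 1 by omega) with e | e | e
  · left
    have : ((u.val + 1 : ℕ) : ZMod n) = ((v.val : ℕ) : ZMod n) := by rw [e]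
    push_cast at this
    rw [hu, hv] at this
    linear_combination this
  · right; left
    have : ((u.val : ℕ) : ZMod n) = ((v.val : ℕ) : ZMod n) := by rw [e]
    rw [hu, hv] at this
    linear_combination this
  · right; right
    have : ((u.val : ℕ) : ZMod n) = ((v.val + 1 : ℕ) : ZMod n) := by rw [e]
    push_cast at this
    rw [hu, hv] at this
    linear_combination this

lemma block_coord {n a b x y : ℕ} (hx : x < n) (hy : y < n)
    (h : -1 ≤ ((b*(n+1)+y : ℕ):ℤ) - ((a*(n+1)+x : ℕ):ℤ) ∧
         ((b*(n+1)+y : ℕ):ℤ) - ((a*(n+1)+x : ℕ):ℤ) ≤ 1) :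
    a = b ∧ -1 ≤ (y:ℤ)-(x:ℤ) ∧ (y:ℤ)-(x:ℤ) ≤ 1 := by
  have key : a = b := by
    rcases Nat.lt_trichotomy a b with hab | hab | hab
    · exfalso
      have hAB : a*(n+1) + (n+1) ≤ b*(n+1) := by
        calc a*(n+1) + (n+1) = (a+1)*(n+1) := by ring
          _ ≤ b*(n+1) := Nat.mul_le_mul_right _ (by omega)
      set A := a*(n+1) with hA
      set B := b*(n+1) with hB
      omega
    · exact hab
    · exfalso
      have hAB : b*(n+1) + (n+1) ≤ a*(n+1) := by
        calc b*(n+1) + (n+1) = (b+1)*(n+1) := by ring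
          _ ≤ a*(n+1) := Nat.mul_le_mul_right _ (by omega)
      set A := a*(n+1) with hA
      set B := b*(n+1) with hB
      omega
  subst key
  set A := a*(n+1) with hA
  refine ⟨rfl, by omega, by omega⟩

lemma two_k_eq (d : ℕ) : 2 * ((3 ^ d - 1) / 2) = 3 ^ d - 1 := by
  have : Odd (3 ^ d) := Odd.pow ⟨1, by norm_num⟩
  obtain ⟨c, hc⟩ := this
  omega

-- ========== the three key inequalities ==========

lemma key_lower (d n : ℕ) :
    halfNum (kingsGraph d (fun _ => n)) ≤
      betaK (torusGraph d (fun _ => (n+1))) ((3 ^ d - 1) / 2) := by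
  classical
  set G := kingsGraph d (fun _ => n)
  set H := torusGraph d (fun _ => (n+1))
  set φ : (∀ i : Fin d, Fin n) → (∀ i : Fin d, ZMod (n+1)) :=
    fun u i => ((u i : ℕ) : ZMod (n+1)) with hφ
  have hinj : Function.Injective φ := by
    intro u v h
    funext i
    have := congrFun h i
    simp only [hφ] at this
    have := congrArg ZMod.val this
    rw [ZMod.val_cast_of_lt (by have := (u i).isLt; omega),
        ZMod.val_cast_of_lt (by have := (v i).isLt; omega)] at this
    exact Fin.val_injective this
  have hbwd : ∀ u v, H.Adj (φ v) (φ u) → G.Adj v u := by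
    rintro u v ⟨hne, hadj⟩
    refine ⟨fun h => hne (by rw [h]), fun i => ?_⟩
    have h2 := zmod_step (x := (v i : ℕ)) (y := (u i : ℕ)) (v i).isLt (u i).isLt (hadj i)
    rw [abs_le]
    exact_mod_cast h2
  have hdeg : ∀ v, (G.neighborSet v).ncard ≤ 2 * ((3 ^ d - 1) / 2) := by
    intro v
    rw [two_k_eq]
    exact kings_deg_le d n v
  obtain ⟨S, hS, hcard⟩ := halfNum_witness G
  have hk : IsKDependent H ((3 ^ d - 1) / 2) (φ '' S) :=
    kdep_of_half _ φ hinj hbwd hdeg hS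
  calc halfNum G = S.ncard := hcard.symm
    _ = (φ '' S).ncard := (Set.ncard_image_of_injective _ hinj).symm
    _ ≤ _ := le_betaK H _ hk

lemma key_upper (d n : ℕ) (hn : 3 ≤ n) :
    betaK (torusGraph d (fun _ => n)) ((3 ^ d - 1) / 2) ≤
      halfNum (kingsGraph d (fun _ => (n+2))) := by
  classical
  haveI : NeZero n := ⟨by omega⟩
  set G := torusGraph d (fun _ => n)
  set H := kingsGraph d (fun _ => (n+2))
  set ψ : (∀ i : Fin d, ZMod n) → (∀ i : Fin d, Fin (n+2)) :=
    fun w i => ⟨(w i).val + 1, by have := ZMod.val_lt (w i); omega⟩ with hψ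
  have hinj : Function.Injective ψ := by
    intro u v h
    funext i
    have := congrArg (fun z => (z i : ℕ)) h
    simp only [hψ] at this
    exact ZMod.val_injective n (by omega)
  have hbwd : ∀ u v, H.Adj (ψ v) (ψ u) → G.Adj v u := by
    rintro u v ⟨hne, hadj⟩
    refine ⟨fun h => hne (by rw [h]), fun i => ?_⟩
    have h1 := abs_le.1 (hadj i)
    have h2 : ((ψ u i : ℕ) : ℤ) = (u i).val + 1 := by simp [hψ]
    have h3 : ((ψ v i : ℕ) : ℤ) = (v i).val + 1 := by simp [hψ]
    refine zmod_of_val_step ⟨?_, ?_⟩ <;> omega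
  have hdeg : ∀ w, 2 * ((3 ^ d - 1) / 2) ≤ (H.neighborSet (ψ w)).ncard := by
    intro w
    rw [two_k_eq]
    refine kings_deg_ge d n (ψ w) (fun i => ?_)
    have := ZMod.val_lt (w i)
    constructor <;> simp [hψ] <;> omega
  obtain ⟨S, hS, hcard⟩ := betaK_witness G ((3 ^ d - 1) / 2)
  have hh : IsHalfDependent H (ψ '' S) :=
    half_of_kdep _ ψ hinj hbwd hdeg hS
  calc betaK G _ = S.ncard := hcard.symm
    _ = (ψ '' S).ncard := (Set.ncard_image_of_injective _ hinj).symm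
    _ ≤ _ := le_halfNum H hh

lemma key_pack (d n q m : ℕ) (h : q * (n+1) ≤ m) :
    q ^ d * halfNum (kingsGraph d (fun _ => n)) ≤ halfNum (kingsGraph d (fun _ => m)) := by
  classical
  set G := kingsGraph d (fun _ => n)
  set H := kingsGraph d (fun _ => m)
  set Φ : (Fin d → Fin q) → (∀ i : Fin d, Fin n) → (∀ i : Fin d, Fin m) :=
    fun j u i => ⟨(j i : ℕ) * (n+1) + (u i : ℕ), by
      have h1 := (j i).isLt
      have h2 := (u i).isLt
      calc (j i : ℕ) * (n+1) + (u i : ℕ) < (j i : ℕ) * (n+1) + (n+1) := by omega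
        _ = ((j i : ℕ) + 1) * (n+1) := by ring
        _ ≤ q * (n+1) := Nat.mul_le_mul_right _ (by omega)
        _ ≤ m := h⟩ with hΦ
  -- coordinates of images
  have hcoord : ∀ j u (i : Fin d), (Φ j u i : ℕ) = (j i : ℕ) * (n+1) + (u i : ℕ) := by
    intro j u i; simp [hΦ]
  -- joint injectivity
  have hinj2 : ∀ j j' u u', Φ j u = Φ j' u' → j = j' ∧ u = u' := by
    intro j j' u u' hE
    have hc : ∀ i : Fin d, (j i : ℕ) = (j' i : ℕ) ∧ (u i : ℕ) = (u' i : ℕ) := by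
      intro i
      have e : ((j i : ℕ) * (n+1) + (u i : ℕ) : ℕ) = ((j' i : ℕ) * (n+1) + (u' i : ℕ) : ℕ) := by
        have := congrArg (fun z => (z i : ℕ)) hE
        simpa only [hcoord] using this
      have := block_coord (a := (j i : ℕ)) (b := (j' i : ℕ)) (x := (u i : ℕ)) (y := (u' i : ℕ))
        (u i).isLt (u' i).isLt (by rw [← e]; simp)
      obtain ⟨h1, -, -⟩ := this
      rw [h1] at e
      exact ⟨h1, Nat.add_left_cancel e⟩
    constructor
    · funext i; exact Fin.val_injective (hc i).1
    · funext i; exact Fin.val_injective (hc i).2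
  have hinjΦ : ∀ j, Function.Injective (Φ j) := fun j u u' hE => (hinj2 j j u u' hE).2
  -- adjacency backwards
  have hbwd : ∀ j j' u v, H.Adj (Φ j v) (Φ j' u) → j = j' ∧ (Φ j v ≠ Φ j u) ∧
      ∀ i, |((u i : ℕ) : ℤ) - ((v i : ℕ) : ℤ)| ≤ 1 := by
    rintro j j' u v ⟨hne, hadj⟩
    have hc : ∀ i : Fin d, (j i : ℕ) = (j' i : ℕ) ∧
        -1 ≤ ((u i : ℕ) : ℤ) - ((v i : ℕ) : ℤ) ∧ ((u i : ℕ) : ℤ) - ((v i : ℕ) : ℤ) ≤ 1 := by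
      intro i
      have e := abs_le.1 (hadj i)
      rw [hcoord j' u i, hcoord j v i] at e
      exact block_coord (x := (v i : ℕ)) (y := (u i : ℕ)) (v i).isLt (u i).isLt e
    have hjj : j = j' := by funext i; exact Fin.val_injective (hc i).1
    subst hjj
    exact ⟨rfl, hne, fun i => abs_le.2 ⟨(hc i).2.1, (hc i).2.2⟩⟩
  -- adjacency forwards
  have hfwd : ∀ j u v, G.Adj v u → H.Adj (Φ j v) (Φ j u) := by
    rintro j u v ⟨hne, hadj⟩
    refine ⟨fun hE => hne ((hinj2 j j v u hE).2), fun i => ?_⟩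
    have h4 := abs_le.1 (hadj i)
    rw [abs_le, hcoord j u i, hcoord j v i]
    push_cast at h4 ⊢
    constructor <;> linarith [h4.1, h4.2]
  obtain ⟨S, hS, hcard⟩ := halfNum_witness G
  set S' : Set (∀ i : Fin d, Fin m) := ⋃ j, Φ j '' S with hS'
  -- half dependence
  have hhalf : IsHalfDependent H S' := by
    intro w hw
    rw [hS', Set.mem_iUnion] at hw
    obtain ⟨j, v, hv, rfl⟩ := hw
    have hsub : S' ∩ H.neighborSet (Φ j v) ⊆ Φ j '' (S ∩ G.neighborSet v) := by
      rintro w ⟨hw1, hw2⟩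
      rw [hS', Set.mem_iUnion] at hw1
      obtain ⟨j', u, hu, rfl⟩ := hw1
      obtain ⟨hjj, hne, habs⟩ := hbwd j j' u v hw2
      subst hjj
      refine ⟨u, ⟨hu, ?_, fun i => habs i⟩, rfl⟩
      exact fun hE => hne (by rw [hE])
    calc 2 * (S' ∩ H.neighborSet (Φ j v)).ncard
        ≤ 2 * (Φ j '' (S ∩ G.neighborSet v)).ncard := by
          have := Set.ncard_le_ncard hsub (Set.toFinite _); omega
      _ = 2 * (S ∩ G.neighborSet v).ncard := by
          rw [Set.ncard_image_of_injective _ (hinjΦ j)]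
      _ ≤ (G.neighborSet v).ncard := hS v hv
      _ ≤ (H.neighborSet (Φ j v)).ncard :=
          neighbor_le (Φ j) (hinjΦ j) (fun u v hA => hfwd j u v hA) v
  -- cardinality of S'
  have hcardS' : S'.ncard = q ^ d * S.ncard := by
    have himg : S' = (fun p : (Fin d → Fin q) × (∀ i : Fin d, Fin n) => Φ p.1 p.2) ''
        (Set.univ ×ˢ S) := by
      ext w
      rw [hS', Set.mem_iUnion]
      constructor
      · rintro ⟨j, v, hv, rfl⟩; exact ⟨(j, v), ⟨Set.mem_univ _, hv⟩, rfl⟩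
      · rintro ⟨⟨j, v⟩, hp, rfl⟩; exact ⟨j, v, hp.2, rfl⟩
    have hinjP : Function.Injective
        (fun p : (Fin d → Fin q) × (∀ i : Fin d, Fin n) => Φ p.1 p.2) := by
      rintro ⟨j, v⟩ ⟨j', v'⟩ hE
      obtain ⟨h1, h2⟩ := hinj2 j j' v v' hE
      simp [h1, h2]
    rw [himg, Set.ncard_image_of_injective _ hinjP]
    have e1 : (Set.univ ×ˢ S : Set ((Fin d → Fin q) × (∀ i : Fin d, Fin n))).ncard
        = Nat.card (↥(Set.univ : Set (Fin d → Fin q)) × ↥S) := by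
      rw [← Nat.card_coe_set_eq]
      exact Nat.card_congr (Equiv.Set.prod _ _)
    rw [e1, Nat.card_prod, Nat.card_coe_set_eq, Nat.card_coe_set_eq,
      Set.ncard_univ, Nat.card_eq_fintype_card]
    simp [Fintype.card_fun]
  calc q ^ d * halfNum G = q ^ d * S.ncard := by rw [hcard]
    _ = S'.ncard := hcardS'.symm
    _ ≤ halfNum H := le_halfNum H hhalf


lemma tendsto_ratio_pow (c : ℝ) (d : ℕ) :
    Filter.Tendsto (fun m : ℕ => (((m:ℝ) + c)/(m:ℝ))^d) Filter.atTop (nhds 1) := by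
  have h1 : Filter.Tendsto (fun m : ℕ => ((m:ℝ) + c)/(m:ℝ)) Filter.atTop (nhds 1) := by
    have he : (fun m : ℕ => ((m:ℝ) + c)/(m:ℝ)) =ᶠ[Filter.atTop]
        (fun m : ℕ => 1 + c * (1/(m:ℝ))) := by
      filter_upwards [Filter.eventually_ge_atTop 1] with m hm
      have hm0 : (m:ℝ) ≠ 0 := by positivity
      field_simp
    have h2 : Filter.Tendsto (fun m : ℕ => 1 + c * (1/(m:ℝ))) Filter.atTop (nhds (1 + c * 0)) :=
      tendsto_const_nhds.add ((tendsto_one_div_atTop_nhds_zero_nat).const_mul c)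
    rw [show (1:ℝ) + c * 0 = 1 by ring] at h2
    exact h2.congr' he.symm
  simpa using h1.pow d

lemma tendsto_ratio_pow' (c : ℝ) (d : ℕ) :
    Filter.Tendsto (fun m : ℕ => ((m:ℝ)/((m:ℝ) + c))^d) Filter.atTop (nhds 1) := by
  have h := (tendsto_ratio_pow c d).inv₀ one_ne_zero
  simp only [← inv_pow, inv_div, inv_one] at h
  exact h

/-- for k = (3^d−1)/2, the toroidal k-dependent limiting density equals
the half-dependent limiting density. -/
theorem stmt_4 (d : ℕ) (hd : 1 ≤ d) :
    ∃ L : ℝ,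
      Filter.Tendsto
        (fun n : ℕ =>
          (betaK (torusGraph d (fun _ => n)) ((3 ^ d - 1) / 2) : ℝ) / (n : ℝ) ^ d)
        Filter.atTop (nhds L) ∧
      Filter.Tendsto
        (fun n : ℕ => (halfNum (kingsGraph d (fun _ => n)) : ℝ) / (n : ℝ) ^ d)
        Filter.atTop (nhds L) := by
  classical
  set k : ℕ := (3 ^ d - 1) / 2 with hk
  set g : ℕ → ℕ := fun n => halfNum (kingsGraph d (fun _ => n)) with hg
  set f : ℕ → ℕ := fun n => betaK (torusGraph d (fun _ => n)) k with hf
  have hgle : ∀ n : ℕ, g n ≤ n ^ d := by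
    intro n
    have h1 := halfNum_le_card (kingsGraph d (fun _ => n))
    have h2 : Fintype.card (∀ i : Fin d, Fin n) = n ^ d := by simp
    rw [h2] at h1
    exact h1
  set A : ℕ → ℝ := fun n => (g n : ℝ) / ((n : ℝ) + 1) ^ d with hA
  have hpow_pos : ∀ n : ℕ, (0:ℝ) < ((n:ℝ) + 1) ^ d := by
    intro n; positivity
  have hAle : ∀ n, A n ≤ 1 := by
    intro n
    rw [hA, div_le_one (hpow_pos n)]
    calc (g n : ℝ) ≤ (n:ℝ) ^ d := by exact_mod_cast hgle n
      _ ≤ ((n:ℝ) + 1) ^ d := by gcongr <;> linarith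
  have hbdd : BddAbove (Set.range A) := by
    refine ⟨1, ?_⟩
    rintro x ⟨n, rfl⟩
    exact hAle n
  set L : ℝ := ⨆ n, A n with hL
  have hAleL : ∀ n, A n ≤ L := fun n => le_ciSup hbdd n
  -- main limit for g
  have hmain : Filter.Tendsto (fun m : ℕ => (g m : ℝ)/(m:ℝ)^d) Filter.atTop (nhds L) := by
    rw [tendsto_order]
    constructor
    · intro a ha
      obtain ⟨n, hn⟩ := exists_lt_of_lt_ciSup (hL ▸ ha)
      set N : ℕ := n + 1 with hN
      have hNpos : (0:ℝ) < (N:ℝ) := by positivity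
      -- floor ratio tends to 1/N
      have ht : Filter.Tendsto (fun m : ℕ => ((m / N : ℕ) : ℝ)/(m:ℝ)) Filter.atTop
          (nhds (1/(N:ℝ))) := by
        have hlow : Filter.Tendsto (fun m : ℕ => 1/(N:ℝ) - 1/(m:ℝ)) Filter.atTop
            (nhds (1/(N:ℝ) - 0)) :=
          tendsto_const_nhds.sub tendsto_one_div_atTop_nhds_zero_nat
        rw [sub_zero] at hlow
        refine tendsto_of_tendsto_of_tendsto_of_le_of_le' hlow tendsto_const_nhds ?_ ?_
        · filter_upwards [Filter.eventually_ge_atTop 1] with m hm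
          have hmpos : (0:ℝ) < (m:ℝ) := by exact_mod_cast hm
          rw [sub_le_iff_le_add, ← add_div, div_le_div_iff₀ hNpos hmpos]
          have h1 : m < (m / N) * N + N := by
            have hdm := Nat.div_add_mod m N
            have hmod : m % N < N := Nat.mod_lt _ (by omega)
            calc m = N * (m / N) + m % N := hdm.symm
              _ < N * (m / N) + N := Nat.add_lt_add_left hmod _
              _ = (m / N) * N + N := by ring
          have h2 : (m:ℝ) < ((m / N : ℕ):ℝ) * N + N := by exact_mod_cast h1
          nlinarith [h2, hmpos, hNpos]
        · filter_upwards [Filter.eventually_ge_atTop 1] with m hm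
          have hmpos : (0:ℝ) < (m:ℝ) := by exact_mod_cast hm
          rw [div_le_div_iff₀ hmpos hNpos]
          have h1 : (m / N) * N ≤ m := Nat.div_mul_le_self m N
          have h2 : ((m / N : ℕ):ℝ) * N ≤ (m:ℝ) := by exact_mod_cast h1
          linarith
      have htA : Filter.Tendsto (fun m : ℕ => (g n : ℝ) * (((m / N : ℕ) : ℝ)/(m:ℝ))^d)
          Filter.atTop (nhds ((g n : ℝ) * (1/(N:ℝ))^d)) :=
        (ht.pow d).const_mul _
      have hAn : (g n : ℝ) * (1/(N:ℝ))^d = A n := by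
        rw [hA]
        have : ((N:ℕ):ℝ) = (n:ℝ) + 1 := by rw [hN]; push_cast; ring
        rw [this, one_div, inv_pow, mul_comm, inv_mul_eq_div]
      rw [hAn] at htA
      filter_upwards [htA.eventually (eventually_gt_nhds hn), Filter.eventually_ge_atTop 1]
        with m hm1 hm2
      refine lt_of_lt_of_le hm1 ?_
      have hmpos : (0:ℝ) < (m:ℝ)^d := by
        have : (0:ℝ) < (m:ℝ) := by exact_mod_cast hm2
        positivity
      have hkey : (m / N) ^ d * g n ≤ g m := key_pack d n (m / N) m (Nat.div_mul_le_self m N)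
      have hkey' : ((m / N : ℕ):ℝ)^d * (g n : ℝ) ≤ (g m : ℝ) := by exact_mod_cast hkey
      rw [div_pow]
      rw [show (g n : ℝ) * (((m / N : ℕ):ℝ)^d / (m:ℝ)^d)
          = (((m / N : ℕ):ℝ)^d * (g n : ℝ)) / (m:ℝ)^d by ring]
      gcongr
    · intro b hb
      have hub : Filter.Tendsto (fun m : ℕ => L * (((m:ℝ) + 1)/(m:ℝ))^d) Filter.atTop
          (nhds (L * 1)) := (tendsto_ratio_pow 1 d).const_mul L
      rw [mul_one] at hub
      filter_upwards [hub.eventually (eventually_lt_nhds hb), Filter.eventually_ge_atTop 1]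
        with m hm1 hm2
      refine lt_of_le_of_lt ?_ hm1
      have hmpos : (0:ℝ) < (m:ℝ) := by exact_mod_cast hm2
      have heq : (g m : ℝ)/(m:ℝ)^d = A m * (((m:ℝ) + 1)/(m:ℝ))^d := by
        rw [hA, div_pow]
        field_simp
      rw [heq]
      have : (0:ℝ) ≤ (((m:ℝ) + 1)/(m:ℝ))^d := by positivity
      exact mul_le_mul_of_nonneg_right (hAleL m) this
  -- A tends to L as well
  have hAlim : Filter.Tendsto A Filter.atTop (nhds L) := by
    have h1 : Filter.Tendsto (fun m : ℕ => (g m : ℝ)/(m:ℝ)^d * ((m:ℝ)/((m:ℝ)+1))^d)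
        Filter.atTop (nhds (L * 1)) := hmain.mul (tendsto_ratio_pow' 1 d)
    rw [mul_one] at h1
    refine h1.congr' ?_
    filter_upwards [Filter.eventually_ge_atTop 1] with m hm
    have hmpos : (0:ℝ) < (m:ℝ) := by exact_mod_cast hm
    simp only [hA, div_pow]
    field_simp
  -- lower squeeze sequence
  have hlo : Filter.Tendsto (fun n : ℕ => (g (n-1) : ℝ)/(n:ℝ)^d) Filter.atTop (nhds L) := by
    have h1 : Filter.Tendsto (fun n : ℕ => A (n-1)) Filter.atTop (nhds L) :=
      hAlim.comp (tendsto_sub_atTop_nat 1)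
    refine h1.congr' ?_
    filter_upwards [Filter.eventually_ge_atTop 1] with n hn
    simp only [hA]
    have : ((n-1 : ℕ):ℝ) + 1 = (n:ℝ) := by
      rw [Nat.cast_sub hn]; ring
    rw [this]
  -- upper squeeze sequence
  have hhi : Filter.Tendsto (fun n : ℕ => (g (n+2) : ℝ)/(n:ℝ)^d) Filter.atTop (nhds L) := by
    have h1 : Filter.Tendsto (fun n : ℕ => (g (n+2) : ℝ)/((n+2:ℕ):ℝ)^d) Filter.atTop (nhds L) :=
      hmain.comp (tendsto_add_atTop_nat 2)
    have h2 : Filter.Tendsto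
        (fun n : ℕ => (g (n+2) : ℝ)/((n+2:ℕ):ℝ)^d * (((n:ℝ)+2)/(n:ℝ))^d)
        Filter.atTop (nhds (L * 1)) := h1.mul (tendsto_ratio_pow 2 d)
    rw [mul_one] at h2
    refine h2.congr' ?_
    filter_upwards [Filter.eventually_ge_atTop 1] with n hn
    have hnpos : (0:ℝ) < (n:ℝ) := by exact_mod_cast hn
    have hc : ((n+2:ℕ):ℝ) = (n:ℝ) + 2 := by push_cast; ring
    rw [hc, div_pow]
    field_simp
  -- squeeze for f
  have hflim : Filter.Tendsto (fun n : ℕ => (f n : ℝ)/(n:ℝ)^d) Filter.atTop (nhds L) := by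
    refine tendsto_of_tendsto_of_tendsto_of_le_of_le' hlo hhi ?_ ?_
    · filter_upwards [Filter.eventually_ge_atTop 3] with n hn
      have h1 : g (n-1) ≤ f n := by
        have := key_lower d (n-1)
        rw [show (n-1)+1 = n by omega] at this
        exact this
      gcongr

    · filter_upwards [Filter.eventually_ge_atTop 3] with n hn
      have h1 : f n ≤ g (n+2) := key_upper d n hn
      gcongr
  exact ⟨L, hflim, hmain⟩
end

section
/- The limit inferior as n → ∞ of β_5(T^(2)[n])/n² is at least 9/13; that is, the 5-dependent limiting density τ_5^(2) for two-dimensional toroidal kings graphs is at least 9/13. -/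
open Filter Topology

/-! ### Auxiliary material for Statement 6 -/

/-- The periodic diagonal pattern: residues mod 13 that belong to the dense set. -/
def pat (r : ZMod 13) : Prop := r ∈ ({0,1,2,3,4,5,6,8,11} : Finset (ZMod 13))

instance : DecidablePred pat := fun r => by unfold pat; infer_instance

/-- The candidate 5-dependent set: the pattern `x + 5y mod 13 ∈ A`
restricted to the box `[0,m) × [0,m)`. -/
def Spat (n m : ℕ) : Set (∀ _ : Fin 2, ZMod n) :=
  {v | (v 0).val < m ∧ (v 1).val < m ∧
    pat (((v 0).val : ZMod 13) + 5 * ((v 1).val : ZMod 13))}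

/-- The possible displacements towards in-pattern neighbours. -/
def goodD (r : ZMod 13) : Finset (ℤ × ℤ) :=
  (({-1,0,1} : Finset ℤ) ×ˢ ({-1,0,1} : Finset ℤ)).filter
    (fun δ => δ ≠ (0,0) ∧ pat (r + (δ.1 : ZMod 13) + 5 * (δ.2 : ZMod 13)))

lemma goodD_card : ∀ r : ZMod 13, pat r → (goodD r).card ≤ 5 := by decide

lemma base13 : ∀ c : ZMod 13,
    ((Finset.range 13).filter fun t : ℕ => pat ((t : ZMod 13) + c)).card = 9 := by decide

lemma count13 (c : ZMod 13) (a : ℕ) :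
    ((Finset.range (13*a)).filter fun t : ℕ => pat ((t : ZMod 13) + c)).card = 9*a := by
  induction a with
  | zero => simp
  | succ a ih =>
    have h : 13 * (a+1) = 13*a + 13 := by ring
    have hcast : ∀ t : ℕ, (((13*a + t : ℕ)) : ZMod 13) = (t : ZMod 13) := by
      intro t
      push_cast
      simp [show (13 : ZMod 13) = 0 from by decide]
    rw [h, Finset.range_add, Finset.filter_union,
      Finset.card_union_of_disjoint, ih]
    · have h2 : (((Finset.range 13).map (addLeftEmbedding (13*a))).filter
          fun t : ℕ => pat ((t : ZMod 13) + c)).card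
          = ((Finset.range 13).filter fun t : ℕ => pat ((t : ZMod 13) + c)).card := by
        rw [Finset.filter_map, Finset.card_map]
        refine congrArg Finset.card (Finset.filter_congr ?_)
        intro t ht
        simp [addLeftEmbedding_apply, hcast]
      rw [h2, base13]
      ring
    · rw [Finset.disjoint_left]
      intro x hx hx'
      simp only [Finset.mem_filter, Finset.mem_range, Finset.mem_map,
        addLeftEmbedding_apply] at hx hx'
      obtain ⟨⟨u, hu, rfl⟩, -⟩ := hx'
      omega

lemma scard {n : ℕ} (a : ℕ) (hn : 0 < n) (hm : 13*a ≤ n) :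
    (Spat n (13*a)).ncard = 117 * a^2 := by
  haveI : NeZero n := ⟨hn.ne'⟩
  set m := 13*a with hmdef
  set f : (∀ _ : Fin 2, ZMod n) → ℕ × ℕ := fun v => ((v 0).val, (v 1).val) with hf
  set G : Finset (ℕ × ℕ) := (Finset.range m ×ˢ Finset.range m).filter
    (fun ab => pat ((ab.1 : ZMod 13) + 5 * (ab.2 : ZMod 13))) with hG
  have hinj : Set.InjOn f (Spat n m) := by
    intro v hv w hw hvw
    funext i
    have h0 : (v 0).val = (w 0).val := congrArg Prod.fst hvw
    have h1 : (v 1).val = (w 1).val := congrArg Prod.snd hvw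
    fin_cases i
    · exact ZMod.val_injective n h0
    · exact ZMod.val_injective n h1
  have himg : f '' Spat n m = ↑G := by
    ext ⟨x, y⟩
    simp only [Set.mem_image, Finset.coe_filter, Finset.mem_product, Finset.mem_range,
      Set.mem_setOf_eq, hG]
    constructor
    · rintro ⟨v, ⟨h1, h2, h3⟩, hv⟩
      obtain ⟨rfl, rfl⟩ : (v 0).val = x ∧ (v 1).val = y := by
        constructor
        · exact congrArg Prod.fst hv
        · exact congrArg Prod.snd hv
      exact ⟨⟨h1, h2⟩, h3⟩
    · rintro ⟨⟨h1, h2⟩, h3⟩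
      refine ⟨![(x : ZMod n), (y : ZMod n)], ?_, ?_⟩
      · refine ⟨?_, ?_, ?_⟩
        · show ((x : ZMod n)).val < m
          rw [ZMod.val_cast_of_lt (by omega)]
          exact h1
        · show ((y : ZMod n)).val < m
          rw [ZMod.val_cast_of_lt (by omega)]
          exact h2
        · show pat ((((x : ZMod n)).val : ZMod 13) + 5 * (((y : ZMod n)).val : ZMod 13))
          rw [ZMod.val_cast_of_lt (by omega : x < n), ZMod.val_cast_of_lt (by omega : y < n)]
          exact h3
      · show (((x:ZMod n)).val, ((y:ZMod n)).val) = (x, y)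
        rw [ZMod.val_cast_of_lt (by omega : x < n), ZMod.val_cast_of_lt (by omega : y < n)]
  have h1 : (Spat n m).ncard = G.card := by
    rw [← Set.ncard_coe_finset, ← himg, Set.ncard_image_of_injOn hinj]
  rw [h1, hG]
  rw [Finset.card_filter, Finset.sum_product_right]
  have h2 : ∀ b : ℕ, (∑ x ∈ Finset.range m,
      if pat (((x, b).1 : ZMod 13) + 5 * (((x, b).2 : ℕ) : ZMod 13)) then 1 else 0) = 9*a := by
    intro b
    rw [← Finset.card_filter]
    exact count13 (5 * (b : ZMod 13)) a
  rw [Finset.sum_congr rfl (fun b _ => h2 b), Finset.sum_const, Finset.card_range,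
    smul_eq_mul, hmdef]
  ring

lemma diff_helper {n m : ℕ} (hm : m + 2 ≤ n) {x y : ZMod n} (hx : x.val < m)
    (hy : y.val < m) {c : ℤ} (hc : |c| ≤ 1) (h : y - x = (c : ZMod n)) :
    (y.val : ℤ) - (x.val : ℤ) = c := by
  haveI : NeZero n := ⟨by omega⟩
  have h2 : (((y.val : ℤ) - (x.val : ℤ) - c : ℤ) : ZMod n) = 0 := by
    push_cast
    rw [ZMod.natCast_val, ZMod.natCast_val, ZMod.cast_id, ZMod.cast_id]
    rw [sub_eq_zero, ← h]
  have h3 : (n : ℤ) ∣ ((y.val : ℤ) - (x.val : ℤ) - c) :=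
    (ZMod.intCast_zmod_eq_zero_iff_dvd _ _).mp h2
  obtain ⟨hc1, hc2⟩ := abs_le.mp hc
  have hxv : (x.val : ℤ) < m := by exact_mod_cast hx
  have hyv : (y.val : ℤ) < m := by exact_mod_cast hy
  have hmn : (m : ℤ) + 2 ≤ n := by exact_mod_cast hm
  have h4 := Int.eq_zero_of_abs_lt_dvd h3 (by
    rw [abs_lt]
    constructor <;> omega)
  omega

lemma spat_dep {n m : ℕ} (hm : m + 2 ≤ n) :
    IsKDependent (torusGraph 2 (fun _ => n)) 5 (Spat n m) := by
  haveI : NeZero n := ⟨by omega⟩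
  intro v hv
  obtain ⟨hv0, hv1, hvp⟩ := hv
  set r : ZMod 13 := ((v 0).val : ZMod 13) + 5 * ((v 1).val : ZMod 13) with hr
  have hb := goodD_card r hvp
  rw [← Set.ncard_coe_finset] at hb
  refine le_trans (Set.ncard_le_ncard_of_injOn
    (fun w => (((w 0).val : ℤ) - ((v 0).val : ℤ), ((w 1).val : ℤ) - ((v 1).val : ℤ)))
    ?_ ?_ (goodD r).finite_toSet) hb
  · rintro w ⟨⟨hw0, hw1, hwp⟩, hadj⟩
    obtain ⟨hne, hd⟩ : v ≠ w ∧ ∀ i, w i - v i = -1 ∨ w i - v i = 0 ∨ w i - v i = 1 := hadj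
    have hd0 : ∃ c0 : ℤ, |c0| ≤ 1 ∧ ((w 0).val : ℤ) - ((v 0).val : ℤ) = c0 := by
      rcases hd 0 with h | h | h
      · exact ⟨-1, by norm_num, diff_helper hm hv0 hw0 (by norm_num) (by exact_mod_cast h)⟩
      · exact ⟨0, by norm_num, diff_helper hm hv0 hw0 (by norm_num) (by exact_mod_cast h)⟩
      · exact ⟨1, by norm_num, diff_helper hm hv0 hw0 (by norm_num) (by exact_mod_cast h)⟩
    have hd1 : ∃ c1 : ℤ, |c1| ≤ 1 ∧ ((w 1).val : ℤ) - ((v 1).val : ℤ) = c1 := by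
      rcases hd 1 with h | h | h
      · exact ⟨-1, by norm_num, diff_helper hm hv1 hw1 (by norm_num) (by exact_mod_cast h)⟩
      · exact ⟨0, by norm_num, diff_helper hm hv1 hw1 (by norm_num) (by exact_mod_cast h)⟩
      · exact ⟨1, by norm_num, diff_helper hm hv1 hw1 (by norm_num) (by exact_mod_cast h)⟩
    obtain ⟨c0, hc0, he0⟩ := hd0
    obtain ⟨c1, hc1, he1⟩ := hd1
    simp only [Finset.coe_filter, Set.mem_setOf_eq, goodD, Finset.mem_filter,
      Finset.mem_product, Finset.mem_insert, Finset.mem_singleton]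
    refine ⟨⟨?_, ?_⟩, ?_, ?_⟩
    · rw [he0]; rcases abs_le.mp hc0 with ⟨h1, h2⟩; interval_cases c0 <;> simp
    · rw [he1]; rcases abs_le.mp hc1 with ⟨h1, h2⟩; interval_cases c1 <;> simp
    · intro hzero
      apply hne
      have hf' : ((w 0).val : ℤ) - ((v 0).val : ℤ) = 0 := congrArg Prod.fst hzero
      have hs' : ((w 1).val : ℤ) - ((v 1).val : ℤ) = 0 := congrArg Prod.snd hzero
      have hfst : ((w 0).val : ℤ) = ((v 0).val : ℤ) := by omega
      have hsnd : ((w 1).val : ℤ) = ((v 1).val : ℤ) := by omega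
      funext i
      fin_cases i
      · exact (ZMod.val_injective n (by exact_mod_cast hfst.symm))
      · exact (ZMod.val_injective n (by exact_mod_cast hsnd.symm))
    · have : ((((w 0).val : ℕ) : ZMod 13) + 5 * (((w 1).val : ℕ) : ZMod 13))
          = r + ((((w 0).val : ℤ) - ((v 0).val : ℤ) : ℤ) : ZMod 13)
            + 5 * ((((w 1).val : ℤ) - ((v 1).val : ℤ) : ℤ) : ZMod 13) := by
        rw [hr]; push_cast; ring
      rw [this] at hwp
      exact hwp
  · intro w hw w' hw' hww
    have hf' : ((w 0).val : ℤ) - ((v 0).val : ℤ) = ((w' 0).val : ℤ) - ((v 0).val : ℤ) :=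
      congrArg Prod.fst hww
    have hs' : ((w 1).val : ℤ) - ((v 1).val : ℤ) = ((w' 1).val : ℤ) - ((v 1).val : ℤ) :=
      congrArg Prod.snd hww
    have h0 : ((w 0).val : ℤ) = ((w' 0).val : ℤ) := by omega
    have h1 : ((w 1).val : ℤ) = ((w' 1).val : ℤ) := by omega
    funext i
    fin_cases i
    · exact ZMod.val_injective n (by exact_mod_cast h0)
    · exact ZMod.val_injective n (by exact_mod_cast h1)

lemma betaK_ge {V : Type*} [Fintype V] (G : SimpleGraph V) (k : ℕ) (S : Set V)
    (hS : IsKDependent G k S) : S.ncard ≤ betaK G k := by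
  apply le_csSup
  · refine ⟨Fintype.card V, ?_⟩
    rintro x ⟨T, -, rfl⟩
    calc T.ncard ≤ (Set.univ : Set V).ncard :=
          Set.ncard_le_ncard (Set.subset_univ T) Set.finite_univ
      _ = Fintype.card V := by rw [Set.ncard_univ, Nat.card_eq_fintype_card]
  · exact ⟨S, hS, rfl⟩

lemma betaK_le_s6 {V : Type*} [Fintype V] (G : SimpleGraph V) (k : ℕ) :
    betaK G k ≤ Fintype.card V := by
  apply csSup_le
  · exact ⟨0, ∅, fun v hv => absurd hv (Set.notMem_empty v), Set.ncard_empty _⟩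
  · rintro x ⟨T, -, rfl⟩
    calc T.ncard ≤ (Set.univ : Set V).ncard :=
          Set.ncard_le_ncard (Set.subset_univ T) Set.finite_univ
      _ = Fintype.card V := by rw [Set.ncard_univ, Nat.card_eq_fintype_card]

lemma card_V (n : ℕ) [NeZero n] : Fintype.card (∀ _ : Fin 2, ZMod n) = n^2 := by
  rw [Fintype.card_pi]
  simp [ZMod.card]

/-- τ_5^(2) ≥ 9/13. -/
theorem stmt_6 :
    (9 : ℝ)/13 ≤ Filter.liminf
      (fun n : ℕ => (betaK (torusGraph 2 (fun _ => n)) 5 : ℝ) / (n : ℝ) ^ 2)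
      Filter.atTop := by
  set f : ℕ → ℝ := fun n : ℕ =>
    (betaK (torusGraph 2 (fun _ => n)) 5 : ℝ) / (n : ℝ) ^ 2 with hf
  set h : ℕ → ℝ := fun n => (9/13) * (1 - 15/(n:ℝ))^2 with hh
  have key : ∀ n : ℕ, 15 ≤ n →
      (117 * (((n-2)/13 : ℕ) : ℝ)^2) ≤ (betaK (torusGraph 2 (fun _ => n)) 5 : ℝ) := by
    intro n hn
    haveI : NeZero n := ⟨by omega⟩
    set a := (n-2)/13 with hadef
    have hdvd : 13*a ≤ n - 2 := by omega
    have hdep := spat_dep (n := n) (m := 13*a) (by omega)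
    have hcard := scard (n := n) a (by omega) (by omega)
    have hbk := betaK_ge (torusGraph 2 (fun _ => n)) 5 (Spat n (13*a)) hdep
    rw [hcard] at hbk
    have : ((117 * a^2 : ℕ) : ℝ) ≤ (betaK (torusGraph 2 (fun _ => n)) 5 : ℝ) := by
      exact_mod_cast hbk
    push_cast at this
    linarith
  have htend : Tendsto h atTop (𝓝 (9/13)) := by
    have h0 : Tendsto (fun n : ℕ => 15/(n:ℝ)) atTop (𝓝 0) :=
      tendsto_const_div_atTop_nhds_zero_nat 15
    have := (((tendsto_const_nhds (x := (1:ℝ))).sub h0).pow 2).const_mul (9/13 : ℝ)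
    simpa using this
  have hle : ∀ᶠ n in atTop, h n ≤ f n := by
    filter_upwards [eventually_ge_atTop 15] with n hn
    have hnpos : (0:ℝ) < n := by
      have : (15:ℝ) ≤ n := by exact_mod_cast hn
      linarith
    set a := (n-2)/13 with hadef
    have ha : n - 15 ≤ 13*a := by omega
    have ha' : ((n:ℝ) - 15)/13 ≤ (a:ℝ) := by
      have h15 : ((n - 15 : ℕ) : ℝ) ≤ ((13*a : ℕ) : ℝ) := by exact_mod_cast ha
      rw [Nat.cast_sub hn] at h15
      push_cast at h15
      linarith
    have hnn : (0:ℝ) ≤ ((n:ℝ) - 15)/13 := by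
      have : (15:ℝ) ≤ n := by exact_mod_cast hn
      linarith
    have heq : h n = 117 * (((n:ℝ) - 15)/13)^2 / (n:ℝ)^2 := by
      rw [hh]
      field_simp
      ring
    rw [heq]
    have step1 : 117 * (((n:ℝ) - 15)/13)^2 / (n:ℝ)^2
        ≤ 117 * ((a:ℝ))^2 / (n:ℝ)^2 := by gcongr
    refine le_trans step1 ?_
    have hd2 : (0:ℝ) < (n:ℝ)^2 := by positivity
    simp only [hf]
    exact (div_le_div_iff_of_pos_right hd2).mpr (key n hn)
  have hub : ∀ᶠ n in atTop, f n ≤ 1 := by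
    filter_upwards [eventually_ge_atTop 15] with n hn
    haveI : NeZero n := ⟨by omega⟩
    have hb := betaK_le_s6 (torusGraph 2 (fun _ => n)) 5
    rw [card_V] at hb
    have hnpos : (0:ℝ) < (n:ℝ)^2 := by
      have : (0:ℝ) < n := by exact_mod_cast (by omega : 0 < n)
      positivity
    rw [hf, div_le_one hnpos]
    exact_mod_cast hb
  calc (9:ℝ)/13 = liminf h atTop := htend.liminf_eq.symm
    _ ≤ liminf f atTop := by
        have hb : IsBoundedUnder (· ≥ ·) atTop h :=
          isBoundedUnder_of ⟨0, fun n => by positivity⟩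
        have hc : IsCoboundedUnder (· ≥ ·) atTop f :=
          IsBoundedUnder.isCoboundedUnder_ge ⟨1, by exact eventually_map.mpr hub⟩
        exact liminf_le_liminf hle hb hc
end
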